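/- Let d be a positive integer, h : ℤ^d → ℝ, x ∈ ℝ^d and r > 0. Define H on B_r(x) by multilinear interpolation: H(y) := ∑_{q ∈ {0,1}^d} ( ∏_{i=1}^d (1 − {y_i} + q_i(2{y_i} − 1)) ) · h(⌊y⌋ + q), where ⌊y⌋ := (⌊y_1⌋, …, ⌊y_d⌋) and {y_i} := y_i − ⌊y_i⌋. Then for all y, y' ∈ B_r(x), |H(y) − H(y')| ≤ √d · ‖Δh‖_{r+√d,∞} · |y − y'|, where ‖Δh‖_{r+√d,∞} := max_{z ∈ ℤ^d ∩ B_{r+√d}(x)} max_{1 ≤ i ≤ d} |h(z + e^{(i)}) − h(z)|. -/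

import Mathlib

open MeasureTheory

/-- The canonical embedding of `ℤ^d` into Euclidean space `ℝ^d`. -/
def latticeEmbed (d : ℕ) (z : Fin d → ℤ) : EuclideanSpace ℝ (Fin d) :=
  WithLp.toLp 2 (fun j => (z j : ℝ))

/-- `‖Δh‖_{ρ,∞}`: the supremum of `|h(z + e⁽ⁱ⁾) − h(z)|` over lattice points `z` in the
closed Euclidean ball of radius `ρ` centred at `x` and over coordinates `i`. -/
noncomputable def deltaNorm (d : ℕ) (h : (Fin d → ℤ) → ℝ)
    (x : EuclideanSpace ℝ (Fin d)) (ρ : ℝ) : ℝ :=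
  sSup {v : ℝ | ∃ (z : Fin d → ℤ) (i : Fin d),
    dist (latticeEmbed d z) x ≤ ρ ∧ v = |h (z + Pi.single i 1) - h z|}

namespace InterpAux

variable {d : ℕ}

/-- The multilinear interpolation evaluated in the cell with corner `z` and local
coordinates `f`. -/
def G (h : (Fin d → ℤ) → ℝ) (z : Fin d → ℤ) (f : Fin d → ℝ) : ℝ :=
  ∑ q : Fin d → Bool,
    (∏ i, (if q i then f i else 1 - f i)) * h (fun i => z i + if q i then 1 else 0)

lemma sumW (f : Fin d → ℝ) :
    ∑ q : Fin d → Bool, ∏ i, (if q i then f i else 1 - f i) = 1 := by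
  have := Finset.prod_univ_sum (fun _ : Fin d => (Finset.univ : Finset Bool))
    (fun i b => if b then f i else 1 - f i)
  simp only [Fintype.piFinset_univ] at this
  rw [← this]
  have : ∀ i : Fin d, (∑ b : Bool, if b then f i else 1 - f i) = 1 := by
    intro i
    simp [Fintype.sum_bool]
  rw [Finset.prod_congr rfl fun i _ => this i]
  simp

lemma G_affine (h : (Fin d → ℤ) → ℝ) (z : Fin d → ℤ) (f : Fin d → ℝ) (i : Fin d) (t : ℝ) :
    G h z (Function.update f i t)
      = (1 - t) * G h z (Function.update f i 0) + t * G h z (Function.update f i 1) := by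
  unfold G
  rw [Finset.mul_sum, Finset.mul_sum, ← Finset.sum_add_distrib]
  refine Finset.sum_congr rfl fun q _ => ?_
  have hP : ∀ s : ℝ,
      (∏ j, (if q j then Function.update f i s j else 1 - Function.update f i s j))
        = (if q i then s else 1 - s) *
          ∏ j ∈ Finset.univ.erase i, (if q j then f j else 1 - f j) := by
    intro s
    rw [← Finset.mul_prod_erase Finset.univ _ (Finset.mem_univ i)]
    simp only [Function.update_self]
    congr 1
    refine Finset.prod_congr rfl fun j hj => ?_
    rw [Function.update_of_ne (Finset.ne_of_mem_erase hj)]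
  rw [hP t, hP 0, hP 1]
  cases hq : q i <;> simp <;> ring

lemma G_slope (h : (Fin d → ℤ) → ℝ) (z : Fin d → ℤ) (f : Fin d → ℝ) (i : Fin d) (M : ℝ)
    (hf : ∀ j, 0 ≤ f j ∧ f j ≤ 1)
    (hcor : ∀ q : Fin d → Bool, q i = false →
      |h ((fun j => z j + if q j then 1 else 0) + Pi.single i 1)
        - h (fun j => z j + if q j then 1 else 0)| ≤ M) :
    |G h z (Function.update f i 1) - G h z (Function.update f i 0)| ≤ M := by
  have hinv : Function.Involutive (fun q : Fin d → Bool => fun j => if j = i then !q j else q j) := by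
    intro q; funext j; by_cases hj : j = i <;> simp [hj]
  set e := hinv.toPerm with he
  have heq : ∀ q j, e q j = if j = i then !q j else q j := fun q j => rfl
  have hB : G h z (Function.update f i 1)
      = ∑ q : Fin d → Bool,
        (∏ j, (if e q j then Function.update f i 1 j else 1 - Function.update f i 1 j))
          * h (fun j => z j + if e q j then 1 else 0) := by
    rw [G]
    exact (Equiv.sum_comp e fun q =>
      (∏ j, (if q j then Function.update f i 1 j else 1 - Function.update f i 1 j))
        * h (fun j => z j + if q j then 1 else 0)).symm
  rw [hB, G, ← Finset.sum_sub_distrib]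
  refine le_trans (Finset.abs_sum_le_sum_abs _ _) ?_
  have key : ∀ q : Fin d → Bool,
      |(∏ j, (if e q j then Function.update f i 1 j else 1 - Function.update f i 1 j))
          * h (fun j => z j + if e q j then 1 else 0)
        - (∏ j, (if q j then Function.update f i 0 j else 1 - Function.update f i 0 j))
          * h (fun j => z j + if q j then 1 else 0)|
      ≤ (∏ j, (if q j then Function.update f i 0 j else 1 - Function.update f i 0 j)) * M := by
    intro q
    cases hq : q i
    · -- q i = false
      set P : ℝ := ∏ j ∈ Finset.univ.erase i, (if q j then f j else 1 - f j) with hP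
      have hPnonneg : 0 ≤ P := by
        refine Finset.prod_nonneg fun j _ => ?_
        rcases hf j with ⟨h0, h1⟩
        cases q j <;> simp <;> linarith
      have h1 : (∏ j, (if e q j then Function.update f i 1 j else 1 - Function.update f i 1 j)) = P := by
        rw [← Finset.mul_prod_erase Finset.univ _ (Finset.mem_univ i)]
        have : e q i = true := by simp [heq, hq]
        rw [hP]
        simp only [this, if_true, Function.update_self, one_mul]
        refine Finset.prod_congr rfl fun j hj => ?_
        have hji := Finset.ne_of_mem_erase hj
        rw [Function.update_of_ne hji]
        simp [heq, hji]
      have h0' : (∏ j, (if q j then Function.update f i 0 j else 1 - Function.update f i 0 j)) = P := by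
        rw [← Finset.mul_prod_erase (Finset.univ : Finset (Fin d))
          (fun j => if q j then Function.update f i 0 j else (1:ℝ) - Function.update f i 0 j)
          (Finset.mem_univ i)]
        rw [hP]
        simp only [hq, Function.update_self, sub_zero, Bool.false_eq_true, if_false, one_mul]
        refine Finset.prod_congr rfl fun j hj => ?_
        have hji := Finset.ne_of_mem_erase hj
        rw [Function.update_of_ne hji]
      have harg : (fun j => z j + if e q j then 1 else 0)
          = (fun j => z j + if q j then 1 else 0) + Pi.single i 1 := by
        funext j
        by_cases hj : j = i
        · subst hj; simp [heq, hq]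
        · simp [heq, hj, Pi.single_apply]
      rw [h1, h0', harg, ← mul_sub, abs_mul, abs_of_nonneg hPnonneg]
      exact mul_le_mul_of_nonneg_left (hcor q hq) hPnonneg
    · -- q i = true
      have hz1 : (∏ j, (if e q j then Function.update f i 1 j else 1 - Function.update f i 1 j)) = 0 := by
        refine Finset.prod_eq_zero (Finset.mem_univ i) ?_
        simp [heq, hq]
      have hz0 : (∏ j, (if q j then Function.update f i 0 j else 1 - Function.update f i 0 j)) = 0 := by
        refine Finset.prod_eq_zero (Finset.mem_univ i) ?_
        simp [hq]
      rw [hz1, hz0]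
      simp
  refine le_trans (Finset.sum_le_sum fun q _ => key q) ?_
  rw [← Finset.sum_mul, sumW]
  simp

lemma G_diff_one (h : (Fin d → ℤ) → ℝ) (z : Fin d → ℤ) (f : Fin d → ℝ) (i : Fin d)
    (M t t' : ℝ) (hf : ∀ j, 0 ≤ f j ∧ f j ≤ 1)
    (hcor : ∀ w : Fin d → ℤ, (∀ j, z j ≤ w j ∧ w j ≤ z j + 1) → ∀ i' : Fin d,
      |h (w + Pi.single i' 1) - h w| ≤ M) :
    |G h z (Function.update f i t) - G h z (Function.update f i t')| ≤ M * |t - t'| := by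
  rw [G_affine h z f i t, G_affine h z f i t']
  have key : |G h z (Function.update f i 1) - G h z (Function.update f i 0)| ≤ M := by
    refine G_slope h z f i M hf fun q hq => ?_
    refine hcor (fun j => z j + if q j then 1 else 0) (fun j => ?_) i
    constructor
    · show z j ≤ z j + if q j = true then 1 else 0
      split <;> omega
    · show (z j + if q j = true then 1 else 0) ≤ z j + 1
      split <;> omega
  have hrw : (1 - t) * G h z (Function.update f i 0) + t * G h z (Function.update f i 1)
      - ((1 - t') * G h z (Function.update f i 0) + t' * G h z (Function.update f i 1))
      = (t - t') * (G h z (Function.update f i 1) - G h z (Function.update f i 0)) := by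
    ring
  rw [hrw, abs_mul, mul_comm]
  exact mul_le_mul_of_nonneg_right key (abs_nonneg _)

lemma G_cell (h : (Fin d → ℤ) → ℝ) (z : Fin d → ℤ) (f f' : Fin d → ℝ) (M : ℝ)
    (hf : ∀ j, 0 ≤ f j ∧ f j ≤ 1) (hf' : ∀ j, 0 ≤ f' j ∧ f' j ≤ 1)
    (hcor : ∀ w : Fin d → ℤ, (∀ j, z j ≤ w j ∧ w j ≤ z j + 1) → ∀ i' : Fin d,
      |h (w + Pi.single i' 1) - h w| ≤ M) :
    |G h z f - G h z f'| ≤ M * ∑ j, |f j - f' j| := by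
  set mix : ℕ → (Fin d → ℝ) := fun k j => if (j : ℕ) < k then f' j else f j with hmix
  have hmix0 : mix 0 = f := by funext j; simp [hmix]
  have hmixd : mix d = f' := by funext j; simp [hmix, j.isLt]
  have tele : G h z f - G h z f'
      = ∑ k ∈ Finset.range d, (G h z (mix k) - G h z (mix (k + 1))) := by
    rw [Finset.sum_range_sub' fun k => G h z (mix k), hmix0, hmixd]
  rw [tele]
  refine le_trans (Finset.abs_sum_le_sum_abs _ _) ?_
  set F : ℕ → ℝ := fun k => if hk : k < d then |f ⟨k, hk⟩ - f' ⟨k, hk⟩| else 0 with hF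
  have step : ∀ k ∈ Finset.range d, |G h z (mix k) - G h z (mix (k + 1))| ≤ M * F k := by
    intro k hk
    rw [Finset.mem_range] at hk
    set i : Fin d := ⟨k, hk⟩ with hi
    have h1 : mix k = Function.update (mix k) i (f i) := by
      funext j
      by_cases hj : j = i
      · subst hj; simp [hmix, hi]
      · rw [Function.update_of_ne hj]
    have h2 : mix (k + 1) = Function.update (mix k) i (f' i) := by
      funext j
      by_cases hj : j = i
      · subst hj; simp [hmix, hi]
      · rw [Function.update_of_ne hj]
        have hjk : (j : ℕ) ≠ k := fun hc => hj (Fin.ext hc)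
        simp only [hmix]
        by_cases hlt : (j : ℕ) < k
        · rw [if_pos hlt, if_pos (by omega)]
        · rw [if_neg hlt, if_neg (by omega)]
    have hmf : ∀ j, 0 ≤ mix k j ∧ mix k j ≤ 1 := by
      intro j
      simp only [hmix]
      by_cases hlt : (j : ℕ) < k
      · rw [if_pos hlt]; exact hf' j
      · rw [if_neg hlt]; exact hf j
    have := G_diff_one h z (mix k) i M (f i) (f' i) hmf hcor
    rw [← h1, ← h2] at this
    have hFk : F k = |f i - f' i| := by rw [hF]; simp [hk, hi]
    rw [hFk]
    exact this
  refine le_trans (Finset.sum_le_sum step) ?_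
  rw [← Finset.mul_sum]
  have : ∑ j : Fin d, |f j - f' j| = ∑ k ∈ Finset.range d, F k := by
    rw [← Fin.sum_univ_eq_sum_range]
    refine Finset.sum_congr rfl fun j _ => ?_
    rw [hF]
    simp [j.isLt]
  rw [this]

lemma G_shift (h : (Fin d → ℤ) → ℝ) (z z' : Fin d → ℤ) (f f' : Fin d → ℝ)
    (hc : ∀ j, (z' j = z j ∧ f' j = f j) ∨ (z' j = z j + 1 ∧ f j = 1 ∧ f' j = 0)) :
    G h z f = G h z' f' := by
  classical
  have hinv : Function.Involutive
      (fun q : Fin d → Bool => fun j => if z' j = z j then q j else !q j) := by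
    intro q; funext j; by_cases hj : z' j = z j <;> simp [hj]
  set e := hinv.toPerm with he
  have heq : ∀ q j, e q j = if z' j = z j then q j else !q j := fun q j => rfl
  have hB : G h z' f'
      = ∑ q : Fin d → Bool,
        (∏ j, (if e q j then f' j else 1 - f' j)) * h (fun j => z' j + if e q j then 1 else 0) := by
    rw [G]
    exact (Equiv.sum_comp e fun q =>
      (∏ j, (if q j then f' j else 1 - f' j)) * h (fun j => z' j + if q j then 1 else 0)).symm
  rw [hB, G]
  refine Finset.sum_congr rfl fun q _ => ?_
  by_cases hbad : ∃ j, z' j ≠ z j ∧ q j = false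
  · obtain ⟨j, hzj, hqj⟩ := hbad
    have hcase := (hc j).resolve_left (fun hl => hzj hl.1)
    have hl : (∏ i, (if q i then f i else 1 - f i)) = 0 := by
      refine Finset.prod_eq_zero (Finset.mem_univ j) ?_
      rw [hqj]
      simp [hcase.2.1]
    have hr : (∏ i, (if e q i then f' i else 1 - f' i)) = 0 := by
      refine Finset.prod_eq_zero (Finset.mem_univ j) ?_
      have : e q j = true := by rw [heq, if_neg hzj, hqj]; rfl
      rw [this]
      simp [hcase.2.2]
    rw [hl, hr, zero_mul, zero_mul]
  · push_neg at hbad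
    have hgood : ∀ j, z' j ≠ z j → q j = true := by
      intro j hj
      cases hqj : q j
      · exact absurd hqj (hbad j hj)
      · rfl
    have hprod : (∏ i, (if q i then f i else 1 - f i))
        = ∏ i, (if e q i then f' i else 1 - f' i) := by
      refine Finset.prod_congr rfl fun j _ => ?_
      rcases hc j with ⟨hz, hfj⟩ | ⟨hz1, hf1, hf0⟩
      · rw [heq, if_pos hz, hfj]
      · have hzj : z' j ≠ z j := by omega
        simp [heq, hzj, hgood j hzj, hf1, hf0]
    have harg : (fun j => z j + if q j then 1 else 0)
        = (fun j => z' j + if e q j then 1 else 0) := by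
      funext j
      rcases hc j with ⟨hz, _⟩ | ⟨hz1, _, _⟩
      · rw [heq, if_pos hz, hz]
      · have hzj : z' j ≠ z j := by omega
        simp [heq, hzj, hgood j hzj, hz1]
    rw [hprod, harg]

lemma G_floor (h : (Fin d → ℤ) → ℝ) (a : Fin d → ℝ) (z : Fin d → ℤ)
    (hbox : ∀ j, (z j : ℝ) ≤ a j ∧ a j ≤ z j + 1) :
    G h (fun j => ⌊a j⌋) (fun j => Int.fract (a j)) = G h z (fun j => a j - z j) := by
  refine (G_shift h z (fun j => ⌊a j⌋) (fun j => a j - z j) (fun j => Int.fract (a j))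
    fun j => ?_).symm
  have h1 : z j ≤ ⌊a j⌋ := Int.le_floor.2 (hbox j).1
  have h2 : ⌊a j⌋ ≤ z j + 1 := by
    have := Int.floor_le_floor (R := ℝ) (hbox j).2
    rwa [show ((z j : ℝ) + 1) = ((z j + 1 : ℤ) : ℝ) by push_cast; ring, Int.floor_intCast] at this
  by_cases heq : ⌊a j⌋ = z j
  · left
    refine ⟨heq, ?_⟩
    show Int.fract (a j) = a j - z j
    rw [← Int.self_sub_floor, heq]
  · right
    have hfl : ⌊a j⌋ = z j + 1 := by omega
    have hle : (z j : ℝ) + 1 ≤ a j := by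
      have := Int.floor_le (a j)
      rw [hfl] at this
      push_cast at this
      linarith
    have haj : a j = z j + 1 := le_antisymm (hbox j).2 hle
    refine ⟨hfl, ?_, ?_⟩
    · show a j - (z j : ℝ) = 1
      rw [haj]; ring
    · show Int.fract (a j) = 0
      rw [← Int.self_sub_floor, hfl, haj]
      push_cast
      ring

lemma coord_le_dist (a b : EuclideanSpace ℝ (Fin d)) (j : Fin d) :
    |a j - b j| ≤ dist a b := by
  rw [EuclideanSpace.dist_eq]
  have h1 : |a j - b j| = Real.sqrt (dist (a j) (b j) ^ 2) := by
    rw [Real.sqrt_sq_eq_abs, Real.dist_eq, abs_abs]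
  rw [h1]
  exact Real.sqrt_le_sqrt (Finset.single_le_sum (f := fun i => dist (a i) (b i) ^ 2)
    (fun i _ => sq_nonneg _) (Finset.mem_univ j))

lemma deltaNorm_bddAbove (h : (Fin d → ℤ) → ℝ) (x : EuclideanSpace ℝ (Fin d)) (ρ : ℝ) :
    BddAbove {v : ℝ | ∃ (z : Fin d → ℤ) (i : Fin d),
      dist (latticeEmbed d z) x ≤ ρ ∧ v = |h (z + Pi.single i 1) - h z|} := by
  have hfin : ({z : Fin d → ℤ | dist (latticeEmbed d z) x ≤ ρ}).Finite := by
    refine Set.Finite.subset (Set.Finite.pi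
      (fun j => (Finset.Icc ⌈x j - ρ⌉ ⌊x j + ρ⌋).finite_toSet)) ?_
    intro z hz
    rw [Set.mem_pi]
    intro j _
    have hcoord : |(z j : ℝ) - x j| ≤ ρ := le_trans (coord_le_dist (latticeEmbed d z) x j) hz
    rw [abs_le] at hcoord
    simp only [Finset.coe_Icc, Set.mem_Icc]
    constructor
    · rw [Int.ceil_le]; linarith [hcoord.1]
    · rw [Int.le_floor]; linarith [hcoord.2]
  have himg : {v : ℝ | ∃ (z : Fin d → ℤ) (i : Fin d),
      dist (latticeEmbed d z) x ≤ ρ ∧ v = |h (z + Pi.single i 1) - h z|}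
      ⊆ (fun p : (Fin d → ℤ) × Fin d => |h (p.1 + Pi.single p.2 1) - h p.1|) ''
        ({z : Fin d → ℤ | dist (latticeEmbed d z) x ≤ ρ} ×ˢ (Set.univ : Set (Fin d))) := by
    rintro v ⟨z, i, hdist, rfl⟩
    exact ⟨(z, i), ⟨hdist, Set.mem_univ _⟩, rfl⟩
  exact ((hfin.prod (Set.finite_univ)).image _).bddAbove.mono himg

lemma deltaNorm_le (h : (Fin d → ℤ) → ℝ) (x : EuclideanSpace ℝ (Fin d)) (ρ : ℝ)
    (z : Fin d → ℤ) (i : Fin d) (hz : dist (latticeEmbed d z) x ≤ ρ) :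
    |h (z + Pi.single i 1) - h z| ≤ deltaNorm d h x ρ :=
  le_csSup (deltaNorm_bddAbove h x ρ) ⟨z, i, hz, rfl⟩

lemma floor_dist_le (x : EuclideanSpace ℝ (Fin d)) :
    dist (latticeEmbed d (fun j => ⌊x j⌋)) x ≤ Real.sqrt d := by
  rw [EuclideanSpace.dist_eq]
  refine Real.sqrt_le_sqrt ?_
  have : ∀ j : Fin d, dist (latticeEmbed d (fun j => ⌊x j⌋) j) (x j) ^ 2 ≤ 1 := by
    intro j
    have h1 : |(⌊x j⌋ : ℝ) - x j| ≤ 1 := by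
      rw [abs_sub_comm, abs_of_nonneg (by linarith [Int.floor_le (x j)])]
      linarith [Int.sub_one_lt_floor (x j), Int.floor_le (x j), Int.lt_floor_add_one (x j)]
    show dist ((⌊x j⌋ : ℝ)) (x j) ^ 2 ≤ 1
    rw [Real.dist_eq]
    nlinarith [abs_nonneg ((⌊x j⌋:ℝ) - x j), sq_abs ((⌊x j⌋:ℝ) - x j)]
  calc (∑ j, dist (latticeEmbed d (fun j => ⌊x j⌋) j) (x j) ^ 2) ≤ ∑ _j : Fin d, (1:ℝ) :=
        Finset.sum_le_sum fun j _ => this j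
  _ = d := by simp

lemma deltaNorm_nonneg (hd : 0 < d) (h : (Fin d → ℤ) → ℝ) (x : EuclideanSpace ℝ (Fin d))
    (ρ : ℝ) (hρ : Real.sqrt d ≤ ρ) : 0 ≤ deltaNorm d h x ρ := by
  have hz : dist (latticeEmbed d (fun j => ⌊x j⌋)) x ≤ ρ := le_trans (floor_dist_le x) hρ
  exact le_trans (abs_nonneg _) (deltaNorm_le h x ρ _ ⟨0, hd⟩ hz)

lemma loc_to_glob (φ : ℝ → ℝ) (C : ℝ) (hC : 0 ≤ C)
    (hloc : ∀ t ∈ Set.Icc (0:ℝ) 1, ∃ δ > 0, ∀ s ∈ Set.Icc (0:ℝ) 1,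
      |s - t| ≤ δ → |φ s - φ t| ≤ C * |s - t|) :
    |φ 1 - φ 0| ≤ C := by
  set S : Set ℝ := {t | t ∈ Set.Icc (0:ℝ) 1 ∧ |φ t - φ 0| ≤ C * t} with hS
  have h0S : (0:ℝ) ∈ S := ⟨⟨le_refl 0, zero_le_one⟩, by simp⟩
  have hbdd : BddAbove S := ⟨1, fun t ht => ht.1.2⟩
  have hne : S.Nonempty := ⟨0, h0S⟩
  set T := sSup S with hT
  have hT0 : 0 ≤ T := le_csSup hbdd h0S
  have hT1 : T ≤ 1 := csSup_le hne fun t ht => ht.1.2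
  obtain ⟨δ, hδ, hδloc⟩ := hloc T ⟨hT0, hT1⟩
  have hTS : T ∈ S := by
    refine ⟨⟨hT0, hT1⟩, ?_⟩
    obtain ⟨s, hsS, hs⟩ := exists_lt_of_lt_csSup hne (show T - δ < T by linarith)
    have hsT : s ≤ T := le_csSup hbdd hsS
    have habs : |s - T| ≤ δ := by rw [abs_le]; constructor <;> linarith
    have h1 : |φ T - φ 0| ≤ |φ T - φ s| + |φ s - φ 0| := by
      have := abs_sub_le (φ T) (φ s) (φ 0); linarith
    have h2 : |φ T - φ s| ≤ C * (T - s) := by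
      have h' := hδloc s hsS.1 habs
      rw [abs_sub_comm (φ s) (φ T),
        show |s - T| = T - s by rw [abs_sub_comm]; exact abs_of_nonneg (by linarith)] at h'
      exact h'
    have h3 : |φ s - φ 0| ≤ C * s := hsS.2
    have hs0 : 0 ≤ s := hsS.1.1
    calc |φ T - φ 0| ≤ C * (T - s) + C * s := by linarith
    _ = C * T := by ring
  have hT1' : T = 1 := by
    by_contra hne1
    have hlt : T < 1 := lt_of_le_of_ne hT1 hne1
    set u := min (T + δ) 1 with hu
    have huT : T < u := lt_min (by linarith) hlt
    have hu1 : u ≤ 1 := min_le_right _ _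
    have hu0 : 0 ≤ u := le_trans hT0 (le_of_lt huT)
    have habs : |u - T| ≤ δ := by
      rw [abs_of_nonneg (by linarith)]
      have : u ≤ T + δ := min_le_left _ _
      linarith
    have h2 : |φ u - φ T| ≤ C * (u - T) := by
      have h' := hδloc u ⟨hu0, hu1⟩ habs
      rwa [show |u - T| = u - T from abs_of_nonneg (by linarith)] at h'
    have huS : u ∈ S := by
      refine ⟨⟨hu0, hu1⟩, ?_⟩
      have h1 : |φ u - φ 0| ≤ |φ u - φ T| + |φ T - φ 0| := by
        have := abs_sub_le (φ u) (φ T) (φ 0); linarith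
      calc |φ u - φ 0| ≤ C * (u - T) + C * T := by linarith [hTS.2]
      _ = C * u := by ring
    have := le_csSup hbdd huS
    linarith
  rw [hT1'] at hTS
  calc |φ 1 - φ 0| ≤ C * 1 := hTS.2
  _ = C := mul_one C

lemma l1_le_sqrt_card (v : Fin d → ℝ) :
    ∑ j, |v j| ≤ Real.sqrt d * Real.sqrt (∑ j, v j ^ 2) := by
  have hcs := Finset.sum_mul_sq_le_sq_mul_sq Finset.univ (fun _ : Fin d => (1:ℝ)) (fun j => |v j|)
  simp only [one_mul, one_pow, sq_abs] at hcs
  have hsum : ∑ _j : Fin d, (1:ℝ) = d := by simp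
  rw [hsum] at hcs
  have h1 : ∑ j, |v j| = Real.sqrt ((∑ j, |v j|) ^ 2) := by
    rw [Real.sqrt_sq (Finset.sum_nonneg fun j _ => abs_nonneg _)]
  rw [h1, ← Real.sqrt_mul (by positivity)]
  exact Real.sqrt_le_sqrt hcs

end InterpAux

/-- the multilinear interpolation `H` of `h` is Lipschitz on `B_r(x)` with
constant `√d · ‖Δh‖_{r+√d,∞}`. -/
theorem interpolation_lipschitz (d : ℕ) (hd : 0 < d) (h : (Fin d → ℤ) → ℝ)
    (x : EuclideanSpace ℝ (Fin d)) (r : ℝ) (hr : 0 < r)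
    (H : EuclideanSpace ℝ (Fin d) → ℝ)
    (hH : ∀ y : EuclideanSpace ℝ (Fin d), dist y x ≤ r →
      H y = ∑ q : Fin d → Bool,
        (∏ i : Fin d,
          (1 - Int.fract (y i) + (if q i then (1:ℝ) else 0) * (2 * Int.fract (y i) - 1)))
          * h (fun i => ⌊y i⌋ + (if q i then 1 else 0))) :
    ∀ y y' : EuclideanSpace ℝ (Fin d), dist y x ≤ r → dist y' x ≤ r →
      |H y - H y'| ≤ Real.sqrt d * deltaNorm d h x (r + Real.sqrt d) * dist y y' := by
  intro y y' hy hy'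
  haveI : Nonempty (Fin d) := ⟨⟨0, hd⟩⟩
  set M := deltaNorm d h x (r + Real.sqrt d) with hM
  have hM0 : 0 ≤ M := InterpAux.deltaNorm_nonneg hd h x _ (by linarith [Real.sqrt_nonneg (d:ℝ)])
  set C := Real.sqrt d * M * dist y y' with hC
  have hC0 : 0 ≤ C := by
    have := Real.sqrt_nonneg (d:ℝ)
    have := dist_nonneg (x := y) (y := y')
    positivity
  set γ : ℝ → EuclideanSpace ℝ (Fin d) := fun t => (1 - t) • y + t • y' with hγ
  have hγco : ∀ t (j : Fin d), γ t j = (1 - t) * y j + t * y' j := by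
    intro t j
    simp [hγ]
  have hγ0 : γ 0 = y := by
    ext j
    rw [hγco]
    ring
  have hγ1 : γ 1 = y' := by
    ext j
    rw [hγco]
    ring
  have hγdist : ∀ t ∈ Set.Icc (0:ℝ) 1, dist (γ t) x ≤ r := by
    intro t ht
    have hx : (1 - t) • x + t • x = x := by
      rw [← add_smul]
      simp
    calc dist (γ t) x = dist ((1-t) • y + t • y') ((1-t) • x + t • x) := by rw [hx]
    _ ≤ dist ((1-t) • y) ((1-t) • x) + dist (t • y') (t • x) := dist_add_add_le _ _ _ _
    _ = |1-t| * dist y x + |t| * dist y' x := by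
        rw [dist_smul₀, dist_smul₀, Real.norm_eq_abs, Real.norm_eq_abs]
    _ ≤ (1-t) * r + t * r := by
        rw [abs_of_nonneg (by linarith [ht.2]), abs_of_nonneg ht.1]
        have h1 : (1-t) * dist y x ≤ (1-t) * r :=
          mul_le_mul_of_nonneg_left hy (by linarith [ht.2])
        have h2 : t * dist y' x ≤ t * r := mul_le_mul_of_nonneg_left hy' ht.1
        linarith
    _ = r := by ring
  set φ : ℝ → ℝ := fun t => InterpAux.G h (fun j => ⌊γ t j⌋) (fun j => Int.fract (γ t j)) with hφ
  have hform : ∀ w : EuclideanSpace ℝ (Fin d), dist w x ≤ r →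
      H w = InterpAux.G h (fun j => ⌊w j⌋) (fun j => Int.fract (w j)) := by
    intro w hw
    rw [hH w hw, InterpAux.G]
    refine Finset.sum_congr rfl fun q _ => ?_
    congr 1
    refine Finset.prod_congr rfl fun i _ => ?_
    cases hq : q i <;> simp [hq] <;> ring
  have hlip : ∀ t ∈ Set.Icc (0:ℝ) 1, ∃ δ > 0, ∀ s ∈ Set.Icc (0:ℝ) 1,
      |s - t| ≤ δ → |φ s - φ t| ≤ C * |s - t| := by
    intro t ht
    set p := γ t with hp
    set εj : Fin d → ℝ := fun j => if Int.fract (p j) = 0 then 1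
      else min (Int.fract (p j)) (1 - Int.fract (p j)) with hεj
    have hεjpos : ∀ j, 0 < εj j := by
      intro j
      rw [hεj]
      dsimp only
      split
      · exact one_pos
      · next hne =>
        have h0 := Int.fract_nonneg (p j)
        have h1 := Int.fract_lt_one (p j)
        exact lt_min (lt_of_le_of_ne h0 (Ne.symm hne)) (by linarith)
    set ε := Finset.univ.inf' Finset.univ_nonempty εj with hε
    have hεpos : 0 < ε := by
      rw [hε, Finset.lt_inf'_iff]
      exact fun j _ => hεjpos j
    refine ⟨ε / (dist y y' + 1), by positivity, fun s hs hst => ?_⟩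
    set a := γ s with ha
    have hcoord : ∀ j, |a j - p j| < εj j := by
      intro j
      have hdiff : a j - p j = (s - t) * (y' j - y j) := by
        rw [ha, hp, hγco, hγco]
        ring
      rw [hdiff, abs_mul]
      have h1 : |y' j - y j| ≤ dist y y' := by
        have := InterpAux.coord_le_dist y' y j
        rwa [dist_comm] at this
      calc |s - t| * |y' j - y j| ≤ (ε / (dist y y' + 1)) * dist y y' :=
            mul_le_mul hst h1 (abs_nonneg _) (by positivity)
      _ < ε := by
            rw [div_mul_eq_mul_div, div_lt_iff₀ (by positivity)]
            have hd0 : (0:ℝ) ≤ dist y y' := dist_nonneg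
            nlinarith
      _ ≤ εj j := Finset.inf'_le _ (Finset.mem_univ j)
    set z : Fin d → ℤ := fun j => ⌊min (p j) (a j)⌋ with hz
    -- basic bounds on z
    have hzp : ∀ j, p j - 1 ≤ (z j : ℝ) ∧ (z j : ℝ) ≤ p j := by
      intro j
      have hup : (z j : ℝ) ≤ p j :=
        le_trans (Int.floor_le _) (min_le_left _ _)
      refine ⟨?_, hup⟩
      by_cases hfr : Int.fract (p j) = 0
      · have hc : ((⌊p j⌋ : ℤ) : ℝ) = p j := by
          have h' : p j - ⌊p j⌋ = 0 := by rw [Int.self_sub_floor, hfr]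
          linarith
        have hεj1 : εj j = 1 := by rw [hεj]; simp [hfr]
        have hb : p j - 1 < a j := by
          have := hcoord j
          rw [hεj1, abs_lt] at this
          linarith [this.1]
        have hm : p j - 1 < min (p j) (a j) := lt_min (by linarith) hb
        have : (⌊p j⌋ - 1 : ℤ) ≤ z j := by
          rw [hz]
          refine Int.le_floor.2 ?_
          push_cast
          rw [hc]
          linarith
        have hcast : ((⌊p j⌋ - 1 : ℤ) : ℝ) ≤ (z j : ℝ) := by exact_mod_cast this
        push_cast at hcast
        linarith [hc, hcast]
      · have hfl : (⌊p j⌋ : ℝ) = p j - Int.fract (p j) := by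
          have := Int.self_sub_floor (p j)
          linarith
        have hεle : εj j ≤ Int.fract (p j) := by
          rw [hεj]
          simp only [hfr, if_false]
          exact min_le_left _ _
        have hb : (⌊p j⌋ : ℝ) ≤ a j := by
          have := hcoord j
          rw [abs_lt] at this
          have := this.1
          linarith [hεle]
        have hm : (⌊p j⌋ : ℝ) ≤ min (p j) (a j) := le_min (Int.floor_le _) hb
        have hle : ⌊p j⌋ ≤ z j := by
          rw [hz]
          exact Int.le_floor.2 hm
        have hcast : ((⌊p j⌋ : ℤ) : ℝ) ≤ (z j : ℝ) := by exact_mod_cast hle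
        have hfr1 : Int.fract (p j) < 1 := Int.fract_lt_one _
        linarith [hfl]
    have hza : ∀ j, (z j : ℝ) ≤ a j ∧ a j ≤ (z j : ℝ) + 1 := by
      intro j
      constructor
      · exact le_trans (Int.floor_le _) (min_le_right _ _)
      · rcases le_total (a j) (p j) with hab | hab
        · have hm : min (p j) (a j) = a j := min_eq_right hab
          rw [hz]
          dsimp only
          rw [hm]
          linarith [Int.lt_floor_add_one (a j)]
        · have hm : min (p j) (a j) = p j := min_eq_left hab
          rw [hz]
          dsimp only
          rw [hm]
          by_cases hfr : Int.fract (p j) = 0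
          · have hc : ((⌊p j⌋ : ℤ) : ℝ) = p j := by
              have h' : p j - ⌊p j⌋ = 0 := by rw [Int.self_sub_floor, hfr]
              linarith
            have hεj1 : εj j = 1 := by rw [hεj]; simp [hfr]
            have := hcoord j
            rw [hεj1, abs_lt] at this
            linarith [this.2, hc]
          · have hfl : (⌊p j⌋ : ℝ) = p j - Int.fract (p j) := by
              have := Int.self_sub_floor (p j)
              linarith
            have hεle : εj j ≤ 1 - Int.fract (p j) := by
              rw [hεj]
              simp only [hfr, if_false]
              exact min_le_right _ _
            have := hcoord j
            rw [abs_lt] at this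
            linarith [this.2, hεle]
    have hzpbox : ∀ j, (z j : ℝ) ≤ p j ∧ p j ≤ (z j : ℝ) + 1 := by
      intro j
      exact ⟨(hzp j).2, by linarith [(hzp j).1]⟩
    have hFp : φ t = InterpAux.G h z (fun j => p j - z j) := by
      rw [hφ]
      exact InterpAux.G_floor h p z hzpbox
    have hFa : φ s = InterpAux.G h z (fun j => a j - z j) := by
      rw [hφ]
      exact InterpAux.G_floor h a z hza
    have hcor : ∀ w : Fin d → ℤ, (∀ j, z j ≤ w j ∧ w j ≤ z j + 1) → ∀ i' : Fin d,
        |h (w + Pi.single i' 1) - h w| ≤ M := by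
      intro w hw i'
      refine InterpAux.deltaNorm_le h x _ w i' ?_
      have h1 : dist (latticeEmbed d w) p ≤ Real.sqrt d := by
        rw [EuclideanSpace.dist_eq]
        refine Real.sqrt_le_sqrt ?_
        calc ∑ j, dist (latticeEmbed d w j) (p j) ^ 2 ≤ ∑ _j : Fin d, (1:ℝ) := by
              refine Finset.sum_le_sum fun j _ => ?_
              have hw1 : ((z j : ℝ)) ≤ (w j : ℝ) := by exact_mod_cast (hw j).1
              have hw2 : ((w j : ℝ)) ≤ (z j : ℝ) + 1 := by exact_mod_cast (hw j).2
              have hb1 : p j - 1 ≤ (w j : ℝ) := by linarith [(hzp j).1]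
              have hb2 : (w j : ℝ) ≤ p j + 1 := by linarith [(hzp j).2]
              have : |latticeEmbed d w j - p j| ≤ 1 := by
                simp only [latticeEmbed]
                rw [abs_le]
                constructor <;> linarith
              rw [Real.dist_eq]
              nlinarith [abs_nonneg (latticeEmbed d w j - p j),
                sq_abs (latticeEmbed d w j - p j)]
        _ = d := by simp
      calc dist (latticeEmbed d w) x ≤ dist (latticeEmbed d w) p + dist p x :=
            dist_triangle _ _ _
      _ ≤ Real.sqrt d + r := add_le_add h1 (hγdist t ht)
      _ = r + Real.sqrt d := by ring
    have hin_a : ∀ j, 0 ≤ a j - z j ∧ a j - z j ≤ 1 := by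
      intro j
      constructor <;> linarith [(hza j).1, (hza j).2]
    have hin_p : ∀ j, 0 ≤ p j - z j ∧ p j - z j ≤ 1 := by
      intro j
      constructor <;> linarith [(hzpbox j).1, (hzpbox j).2]
    have hcell := InterpAux.G_cell h z (fun j => a j - z j) (fun j => p j - z j) M
      hin_a hin_p hcor
    rw [hFa, hFp]
    refine le_trans hcell ?_
    have hsum : ∑ j, |(a j - (z j:ℝ)) - (p j - z j)| = |s - t| * ∑ j, |y' j - y j| := by
      rw [Finset.mul_sum]
      refine Finset.sum_congr rfl fun j _ => ?_
      have hdiff : (a j - (z j:ℝ)) - (p j - z j) = (s - t) * (y' j - y j) := by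
        rw [ha, hp, hγco, hγco]
        ring
      rw [hdiff, abs_mul]
    rw [hsum]
    have hl1 : ∑ j, |y' j - y j| ≤ Real.sqrt d * dist y y' := by
      have hcs := InterpAux.l1_le_sqrt_card (fun j => y' j - y j)
      have hdd : Real.sqrt (∑ j, (y' j - y j) ^ 2) = dist y y' := by
        rw [dist_comm, EuclideanSpace.dist_eq]
        congr 1
        refine Finset.sum_congr rfl fun j _ => ?_
        rw [Real.dist_eq, sq_abs]
      rw [hdd] at hcs
      exact hcs
    calc M * (|s - t| * ∑ j, |y' j - y j|)
        ≤ M * (|s - t| * (Real.sqrt d * dist y y')) := by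
          exact mul_le_mul_of_nonneg_left
            (mul_le_mul_of_nonneg_left hl1 (abs_nonneg _)) hM0
    _ = C * |s - t| := by rw [hC]; ring
  have hglob := InterpAux.loc_to_glob φ C hC0 hlip
  have hHy : H y = φ 0 := by
    rw [hform y hy, hφ]
    dsimp only
    rw [hγ0]
  have hHy' : H y' = φ 1 := by
    rw [hform y' hy', hφ]
    dsimp only
    rw [hγ1]
  rw [hHy, hHy', abs_sub_comm]
  exact hglob
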